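/- Let α, μ > 0 and γ_th > 0, and for γ̄ > 0 let P_out(γ̄) = ∫₀^{γ_th} f_{γ̄}(γ) dγ denote the ideal outage probability under the α-μ SNR density. Then P_out(γ̄) · γ̄^{αμ/2} tends to (μ^{μ−1}/Γ(μ)) · γ_th^{αμ/2} as γ̄ → ∞; that is, P_out(γ̄) ∼ (μ^{μ−1}/Γ(μ)) · (γ_th/γ̄)^{αμ/2} in the high-SNR regime. -/

import Mathlib

open Real MeasureTheory Filter Topology intervalIntegral

/-- The α-μ SNR probability density function. -/
noncomputable def alphaMuDensity (α μ γbar γ : ℝ) : ℝ :=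
  if γ ≤ 0 then 0
  else (α * μ ^ μ) / (2 * Real.Gamma μ * γbar ^ (α * μ / 2)) * γ ^ (α * μ / 2 - 1) *
    Real.exp (-μ * (γ / γbar) ^ (α / 2))

theorem stmt_12 (α μ γth : ℝ) (hα : 0 < α) (hμ : 0 < μ) (hγth : 0 < γth)
    (Pout : ℝ → ℝ)
    (hPout : ∀ γbar : ℝ, 0 < γbar →
      Pout γbar = ∫ γ in (0 : ℝ)..γth, alphaMuDensity α μ γbar γ) :
    Tendsto (fun γbar : ℝ => Pout γbar * γbar ^ (α * μ / 2)) atTop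
      (𝓝 ((μ ^ (μ - 1) / Real.Gamma μ) * γth ^ (α * μ / 2))) := by
  have hΓ : 0 < Real.Gamma μ := Real.Gamma_pos_of_pos hμ
  set p : ℝ := α * μ / 2 with hpdef
  have hp0 : 0 < p := by positivity
  set c : ℝ := α * μ ^ μ / (2 * Real.Gamma μ) with hcdef
  have hc0 : 0 < c := by positivity
  set L : ℝ := μ ^ (μ - 1) / Real.Gamma μ * γth ^ p with hLdef
  have hL0 : 0 < L := by positivity
  have hLc : L = c * γth ^ p / p := by
    rw [hLdef, hcdef, hpdef, Real.rpow_sub hμ, Real.rpow_one]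
    field_simp
  -- the integral of the pure power
  have hpow_int : IntegrableOn (fun γ : ℝ => c * γ ^ (p - 1)) (Set.Ioc 0 γth) := by
    have := (intervalIntegral.intervalIntegrable_rpow' (a := 0) (b := γth)
      (r := p - 1) (by linarith)).const_mul c
    rwa [intervalIntegrable_iff_integrableOn_Ioc_of_le hγth.le] at this
  have hpow_val : ∫ γ in Set.Ioc (0:ℝ) γth, c * γ ^ (p - 1) = L := by
    rw [← intervalIntegral.integral_of_le hγth.le, intervalIntegral.integral_const_mul,
      integral_rpow (Or.inl (by linarith))]
    rw [sub_add_cancel, Real.zero_rpow hp0.ne', hLc]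
    ring
  -- eventual bounds
  have key : ∀ γbar : ℝ, 0 < γbar →
      L * Real.exp (-μ * (γth / γbar) ^ (α / 2)) ≤ Pout γbar * γbar ^ p ∧
      Pout γbar * γbar ^ p ≤ L := by
    intro b hb
    have hbp : (0:ℝ) < b ^ p := Real.rpow_pos_of_pos hb p
    have hrepr : Pout b * b ^ p =
        ∫ γ in Set.Ioc (0:ℝ) γth, c * γ ^ (p - 1) * Real.exp (-μ * (γ / b) ^ (α / 2)) := by
      rw [hPout b hb, intervalIntegral.integral_of_le hγth.le, ← MeasureTheory.integral_mul_const]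
      refine setIntegral_congr_fun measurableSet_Ioc ?_
      intro γ hγ
      have hγ0 : 0 < γ := hγ.1
      simp only [alphaMuDensity, if_neg (not_le.mpr hγ0)]
      rw [hcdef]
      field_simp
      rw [hpdef]
      ring
    have hmeas : AEStronglyMeasurable
        (fun γ : ℝ => c * γ ^ (p - 1) * Real.exp (-μ * (γ / b) ^ (α / 2)))
        (volume.restrict (Set.Ioc (0:ℝ) γth)) := by
      apply Measurable.aestronglyMeasurable
      fun_prop
    have hint : IntegrableOn
        (fun γ : ℝ => c * γ ^ (p - 1) * Real.exp (-μ * (γ / b) ^ (α / 2)))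
        (Set.Ioc 0 γth) := by
      refine hpow_int.mono' hmeas ?_
      filter_upwards [ae_restrict_mem measurableSet_Ioc] with γ hγ
      have hγ0 : 0 < γ := hγ.1
      have hexp : Real.exp (-μ * (γ / b) ^ (α / 2)) ≤ 1 := by
        rw [Real.exp_le_one_iff]
        have : (0:ℝ) ≤ (γ / b) ^ (α / 2) := Real.rpow_nonneg (by positivity) _
        nlinarith
      have hnn : 0 ≤ c * γ ^ (p - 1) := by positivity
      rw [Real.norm_eq_abs, abs_of_nonneg (by positivity)]
      nlinarith [Real.exp_pos (-μ * (γ / b) ^ (α / 2)), Real.rpow_nonneg hγ0.le (p-1)]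
    constructor
    · rw [hrepr, ← hpow_val, ← MeasureTheory.integral_mul_const]
      refine setIntegral_mono_on (hpow_int.mul_const _) hint measurableSet_Ioc ?_
      intro γ hγ
      have hγ0 : 0 < γ := hγ.1
      have hnn : 0 ≤ c * γ ^ (p - 1) := by positivity
      refine mul_le_mul_of_nonneg_left ?_ hnn
      apply Real.exp_le_exp.mpr
      have : (γ / b) ^ (α / 2) ≤ (γth / b) ^ (α / 2) :=
        Real.rpow_le_rpow (by positivity) (by gcongr; exact hγ.2) (by positivity)
      nlinarith
    · rw [hrepr, ← hpow_val]
      refine setIntegral_mono_on hint hpow_int measurableSet_Ioc ?_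
      intro γ hγ
      have hγ0 : 0 < γ := hγ.1
      have hexp : Real.exp (-μ * (γ / b) ^ (α / 2)) ≤ 1 := by
        rw [Real.exp_le_one_iff]
        have : (0:ℝ) ≤ (γ / b) ^ (α / 2) := Real.rpow_nonneg (by positivity) _
        nlinarith
      exact mul_le_of_le_one_right (by positivity) hexp
  -- squeeze
  have hlow : Tendsto (fun b : ℝ => L * Real.exp (-μ * (γth / b) ^ (α / 2))) atTop (𝓝 L) := by
    have h1 : Tendsto (fun b : ℝ => γth / b) atTop (𝓝 0) :=
      tendsto_const_nhds.div_atTop tendsto_id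
    have h2 : Tendsto (fun b : ℝ => (γth / b) ^ (α / 2)) atTop (𝓝 0) := by
      have := (Real.continuousAt_rpow_const 0 (α / 2) (Or.inr (by positivity))).tendsto.comp h1
      simpa [Function.comp_def, Real.zero_rpow (by positivity : (α/2) ≠ 0)] using this
    have h3 : Tendsto (fun b : ℝ => Real.exp (-μ * (γth / b) ^ (α / 2))) atTop (𝓝 1) := by
      have h2' : Tendsto (fun b : ℝ => -μ * (γth / b) ^ (α / 2)) atTop (𝓝 0) := by
        simpa using h2.const_mul (-μ)
      simpa [Function.comp_def] using (Real.continuous_exp.tendsto 0).comp h2'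
    simpa using tendsto_const_nhds.mul h3
  refine tendsto_of_tendsto_of_tendsto_of_le_of_le' hlow tendsto_const_nhds ?_ ?_
  · filter_upwards [eventually_gt_atTop 0] with b hb using (key b hb).1
  · filter_upwards [eventually_gt_atTop 0] with b hb using (key b hb).2
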